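/- Let P = {p_0, ..., p_{n-1}} be n points in convex position in the plane, listed in cyclic (radial) order, with n even. For 0 ≤ i < n/2 define M_i = { p_{i+j-1} p_{n+i-j} : j = 1, ..., n/2 } (indices mod n). Then each M_i is a plane perfect matching of P, and the matchings M_0, ..., M_{n/2 - 1} are pairwise edge-disjoint; hence exactly n/2 plane perfect matchings can be packed into the complete geometric graph on P. -/

import Mathlib

noncomputable section

/-- Points of the Euclidean plane. -/
abbrev Pt : Type := EuclideanSpace ℝ (Fin 2)

/-- Two straight segments *cross* if they share a point interior to both. -/
def SegCross (a b c d : Pt) : Prop :=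
  (openSegment ℝ a b ∩ openSegment ℝ c d).Nonempty

/-- Two edges (unordered pairs of points) cross. -/
def EdgesCross (e f : Sym2 Pt) : Prop :=
  ∃ a b c d : Pt, e = s(a, b) ∧ f = s(c, d) ∧ SegCross a b c d

/-- `M` is a perfect matching on the point set `P`: a set of non-degenerate edges with
endpoints in `P` such that every point of `P` lies in exactly one edge. -/
def IsPerfMatch (P : Set Pt) (M : Set (Sym2 Pt)) : Prop :=
  (∀ e ∈ M, ¬ e.IsDiag ∧ ∀ x ∈ e, x ∈ P) ∧ ∀ x ∈ P, ∃! e, e ∈ M ∧ x ∈ e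

/-- A plane (non-crossing) perfect matching on `P`. -/
def IsPlaneMatch (P : Set Pt) (M : Set (Sym2 Pt)) : Prop :=
  IsPerfMatch P M ∧ M.Pairwise fun e f => ¬ EdgesCross e f

/-- `P` is in convex position: every point of `P` is a vertex of the convex hull. -/
def ConvexPosition (P : Set Pt) : Prop :=
  ∀ x ∈ P, x ∉ convexHull ℝ (P \ {x})

/-- No three points of `P` are collinear. -/
def NoThreeCollinear (P : Set Pt) : Prop :=
  ∀ x ∈ P, ∀ y ∈ P, ∀ z ∈ P, x ≠ y → x ≠ z → y ≠ z →
    ¬ Collinear ℝ ({x, y, z} : Set Pt)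

/-- `e` is an edge of the convex hull of `P`: its endpoints are distinct points of `P` and
the segment joining them lies on the boundary of the convex hull of `P`. -/
def IsHullEdge (P : Set Pt) (e : Sym2 Pt) : Prop :=
  ∃ a b : Pt, e = s(a, b) ∧ a ∈ P ∧ b ∈ P ∧ a ≠ b ∧
    segment ℝ a b ⊆ frontier (convexHull ℝ P)

section AuxLemmas

def gfun (a b x : Pt) : ℝ := (b 0 - a 0) * (x 1 - a 1) - (b 1 - a 1) * (x 0 - a 0)

lemma gfun_left (a b : Pt) : gfun a b a = 0 := by simp [gfun]
lemma gfun_right (a b : Pt) : gfun a b b = 0 := by simp [gfun]; ring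

lemma gfun_combo (a b u v : Pt) (s t : ℝ) (h : s + t = 1) :
    gfun a b (s • u + t • v) = s * gfun a b u + t * gfun a b v := by
  have ht : t = 1 - s := by linarith
  subst ht
  simp only [gfun, PiLp.add_apply, PiLp.smul_apply, smul_eq_mul]
  ring

lemma collinear_of_gfun {a b x : Pt} (hab : a ≠ b) (h : gfun a b x = 0) :
    Collinear ℝ ({a, b, x} : Set Pt) := by
  have hmem : a ∈ ({a, b, x} : Set Pt) := by simp
  rw [collinear_iff_of_mem hmem]
  refine ⟨b - a, ?_⟩
  have hcoord : ¬ (b 0 - a 0 = 0 ∧ b 1 - a 1 = 0) := by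
    rintro ⟨h0, h1⟩
    exact hab (by ext i; fin_cases i <;> simp <;> linarith)
  intro q hq
  rcases hq with rfl | rfl | rfl
  · exact ⟨0, by simp⟩
  · exact ⟨1, by simp⟩
  · unfold gfun at h
    rcases Classical.em (b 0 - a 0 = 0) with h0 | h0
    · have h1 : b 1 - a 1 ≠ 0 := fun h1 => hcoord ⟨h0, h1⟩
      have hq0 : q 0 = a 0 := by
        rw [h0] at h
        have : (b 1 - a 1) * (q 0 - a 0) = 0 := by linarith
        rcases mul_eq_zero.mp this with h' | h'
        · exact absurd h' h1
        · linarith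
      refine ⟨(q 1 - a 1) / (b 1 - a 1), ?_⟩
      ext i; fin_cases i
      · show q 0 = ((q 1 - a 1) / (b 1 - a 1)) * (b 0 - a 0) + a 0
        rw [h0, hq0]; ring
      · show q 1 = ((q 1 - a 1) / (b 1 - a 1)) * (b 1 - a 1) + a 1
        field_simp
        ring
    · refine ⟨(q 0 - a 0) / (b 0 - a 0), ?_⟩
      ext i; fin_cases i
      · show q 0 = ((q 0 - a 0) / (b 0 - a 0)) * (b 0 - a 0) + a 0
        field_simp
        ring
      · show q 1 = ((q 0 - a 0) / (b 0 - a 0)) * (b 1 - a 1) + a 1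
        rw [div_mul_eq_mul_div]
        rw [eq_comm, div_add' _ _ _ h0, div_eq_iff h0]
        ring_nf
        nlinarith [h]

lemma apply_eq (f : Pt →L[ℝ] ℝ) (z : Pt) :
    f z = z 0 * f (EuclideanSpace.single 0 1) + z 1 * f (EuclideanSpace.single 1 1) := by
  have hz : z = z 0 • (EuclideanSpace.single (0:Fin 2) (1:ℝ)) + z 1 • (EuclideanSpace.single 1 1) := by
    ext i; fin_cases i <;> simp [EuclideanSpace.single_apply]
  conv_lhs => rw [hz]
  simp [map_add, map_smul, smul_eq_mul]

lemma det_zero_of_ker (f : Pt →L[ℝ] ℝ) (v w : Pt) (hv : f v = 0) (hw : f w = 0)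
    (hf : ∃ z : Pt, f z ≠ 0) : v 0 * w 1 - v 1 * w 0 = 0 := by
  set α := f (EuclideanSpace.single (0:Fin 2) (1:ℝ)) with hα
  set β := f (EuclideanSpace.single (1:Fin 2) (1:ℝ)) with hβ
  have hv' : v 0 * α + v 1 * β = 0 := by rw [← apply_eq]; exact hv
  have hw' : w 0 * α + w 1 * β = 0 := by rw [← apply_eq]; exact hw
  have hne : α ≠ 0 ∨ β ≠ 0 := by
    by_contra hc
    push_neg at hc
    obtain ⟨z, hz⟩ := hf
    exact hz (by rw [apply_eq, ← hα, ← hβ, hc.1, hc.2]; ring)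
  rcases hne with h | h
  · have key : α * (v 0 * w 1 - v 1 * w 0)
        = w 1 * (v 0 * α + v 1 * β) - v 1 * (w 0 * α + w 1 * β) := by ring
    rw [hv', hw'] at key
    have := key
    simp at this
    rcases this with h' | h'
    · exact absurd h' h
    · exact h'
  · have key : β * (v 0 * w 1 - v 1 * w 0)
        = v 0 * (w 0 * α + w 1 * β) - w 0 * (v 0 * α + v 1 * β) := by ring
    rw [hv', hw'] at key
    simp at key
    rcases key with h' | h'
    · exact absurd h' h
    · exact h'

lemma extreme_pt {P : Set Pt} (hP : ∀ y ∈ P, y ∉ convexHull ℝ (P \ {y}))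
    {x : Pt} (hx : x ∈ P) (hPx : (P \ {x}).Nonempty)
    {u v : Pt} (hu : u ∈ convexHull ℝ P) (hv : v ∈ convexHull ℝ P)
    (hxuv : x ∈ openSegment ℝ u v) : u = x ∧ v = x := by
  obtain ⟨r1, r2, hr1, hr2, hr, hx3⟩ := hxuv
  rcases eq_or_ne u x with rfl | hu'
  · have h2 : r1 • u + r2 • v = r1 • u + r2 • u := by
      rw [hx3, ← add_smul, hr, one_smul]
    exact ⟨rfl, smul_right_injective _ (ne_of_gt hr2) (add_left_cancel h2)⟩
  rcases eq_or_ne v x with rfl | hv'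
  · have h2 : r1 • u + r2 • v = r1 • v + r2 • v := by
      rw [hx3, ← add_smul, hr, one_smul]
    exact absurd (smul_right_injective _ (ne_of_gt hr1) (add_right_cancel h2)) hu'
  exfalso
  have hhull : convexHull ℝ P = convexJoin ℝ {x} (convexHull ℝ (P \ {x})) := by
    rw [← convexHull_insert hPx, Set.insert_diff_singleton, Set.insert_eq_of_mem hx]
  rw [hhull, mem_convexJoin] at hu hv
  obtain ⟨x', hx', zu, hzu, hu2⟩ := hu
  obtain ⟨x'', hx'', zv, hzv, hv2⟩ := hv
  rw [Set.mem_singleton_iff] at hx' hx''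
  rw [hx'] at hu2
  rw [hx''] at hv2
  obtain ⟨s1, s2, hs1, hs2, hs, hu3⟩ := hu2
  obtain ⟨t1, t2, ht1, ht2, ht, hv3⟩ := hv2
  set c := r1 * s2 + r2 * t2 with hc
  rcases eq_or_lt_of_le (show (0:ℝ) ≤ c by positivity) with hc0 | hc0
  · have hs20 : s2 = 0 := by nlinarith
    have : u = x := by
      rw [← hu3, hs20, zero_smul, add_zero, show s1 = 1 by linarith, one_smul]
    exact hu' this
  · have h3 : c • x = (r1 * s2) • zu + (r2 * t2) • zv := by
      calc c • x = (1 - r1*s1 - r2*t1) • x := by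
              rw [show c = 1 - r1*s1 - r2*t1 by nlinarith]
        _ = x - (r1*s1) • x - (r2*t1) • x := by
              rw [sub_smul, sub_smul, one_smul]
        _ = (r1 • u + r2 • v) - (r1*s1) • x - (r2*t1) • x := by rw [hx3]
        _ = (r1 * s2) • zu + (r2 * t2) • zv := by
              rw [← hu3, ← hv3, smul_add, smul_add, smul_smul, smul_smul,
                smul_smul, smul_smul]
              abel
    have hxmem : x ∈ segment ℝ zu zv := by
      refine ⟨(r1*s2)/c, (r2*t2)/c, by positivity, by positivity, ?_, ?_⟩
      · field_simp
        exact hc.symm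
      · have hxx : x = c⁻¹ • (c • x) := by rw [inv_smul_smul₀ (ne_of_gt hc0)]
        rw [hxx, h3, smul_add, smul_smul, smul_smul, div_eq_inv_mul, div_eq_inv_mul]
    exact hP x hx ((convex_convexHull ℝ _).segment_subset hzu hzv hxmem)

lemma mem_open_of_mem_seg {x y z : Pt} (h : z ∈ segment ℝ x y) (h1 : z ≠ x) (h2 : z ≠ y) :
    z ∈ openSegment ℝ x y := by
  obtain ⟨s, t, hs, ht, hst, rfl⟩ := h
  refine ⟨s, t, ?_, ?_, hst, rfl⟩
  · rcases eq_or_lt_of_le hs with h | h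
    · exfalso; apply h2
      rw [← h, zero_smul, zero_add, show t = 1 by linarith, one_smul]
    · exact h
  · rcases eq_or_lt_of_le ht with h | h
    · exfalso; apply h1
      rw [← h, zero_smul, add_zero, show s = 1 by linarith, one_smul]
    · exact h

lemma exists_support {P : Set Pt} (hfin : P.Finite) (hspan : affineSpan ℝ P = ⊤)
    {x : Pt} (hx : x ∈ frontier (convexHull ℝ P)) :
    ∃ f : Pt →L[ℝ] ℝ, (∀ y ∈ convexHull ℝ P, f y ≤ f x) ∧
      ∃ w ∈ convexHull ℝ P, f w < f x := by
  have hK : Convex ℝ (convexHull ℝ P) := convex_convexHull ℝ P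
  have hint : (interior (convexHull ℝ P)).Nonempty := by
    rw [interior_convexHull_nonempty_iff_affineSpan_eq_top]
    exact hspan
  have hxint : x ∉ interior (convexHull ℝ P) := by
    rw [frontier] at hx; exact hx.2
  obtain ⟨f, hf⟩ := geometric_hahn_banach_open_point hK.interior isOpen_interior hxint
  refine ⟨f, ?_, ?_⟩
  · intro y hy
    by_contra hyu
    push_neg at hyu
    obtain ⟨w, hw⟩ := hint
    have hfw : f w < f x := hf w hw
    have he : 0 < f y - f w := by linarith
    obtain ⟨t, htdef⟩ : ∃ t : ℝ, t = (f y - f x) / (2 * (f y - f w)) := ⟨_, rfl⟩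
    have ht0 : 0 < t := by rw [htdef]; apply div_pos <;> linarith
    have ht1 : t < 1 := by
      rw [htdef, div_lt_one (by linarith)]; linarith
    have hmem : t • w + (1 - t) • y ∈ interior (convexHull ℝ P) := by
      apply hK.combo_interior_self_subset_interior (a := t) (b := 1 - t) ht0
        (by linarith) (by ring)
      exact Set.add_mem_add (Set.smul_mem_smul_set hw) (Set.smul_mem_smul_set hy)
    have hlt := hf _ hmem
    rw [map_add, map_smul, map_smul, smul_eq_mul, smul_eq_mul] at hlt
    have hte : t * (f y - f w) = (f y - f x) / 2 := by
      rw [htdef]; field_simp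
    nlinarith
  · obtain ⟨w, hw⟩ := hint
    exact ⟨w, interior_subset hw, hf w hw⟩

lemma span_top {P : Set Pt} {x y z : Pt} (hx : x ∈ P) (hy : y ∈ P) (hz : z ∈ P)
    (h : ¬ Collinear ℝ ({x, y, z} : Set Pt)) : affineSpan ℝ P = ⊤ := by
  have h3 : affineSpan ℝ ({x, y, z} : Set Pt) = ⊤ := by
    have hind : AffineIndependent ℝ ![x, y, z] := by
      rw [affineIndependent_iff_not_collinear_set]
      exact fun hc => h (by simpa using hc)
    have hr : Set.range ![x, y, z] = ({x, y, z} : Set Pt) := by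
      ext q; simp [Set.range_subset_iff]; tauto
    have := hind.affineSpan_eq_top_iff_card_eq_finrank_add_one.2 (by simp)
    rwa [hr] at this
  have : affineSpan ℝ ({x, y, z} : Set Pt) ≤ affineSpan ℝ P := by
    apply affineSpan_mono
    intro q hq
    rcases hq with rfl | rfl | rfl <;> assumption
  rw [h3] at this
  exact top_le_iff.mp this

lemma not_collinear_P {P : Set Pt} (hP : ∀ y ∈ P, y ∉ convexHull ℝ (P \ {y}))
    {x y z : Pt} (hx : x ∈ P) (hy : y ∈ P) (hz : z ∈ P)
    (hxy : x ≠ y) (hxz : x ≠ z) (hyz : y ≠ z) :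
    ¬ Collinear ℝ ({x, y, z} : Set Pt) := by
  intro hc
  have hhx := subset_convexHull ℝ P hx
  have hhy := subset_convexHull ℝ P hy
  have hhz := subset_convexHull ℝ P hz
  rcases hc.wbtw_or_wbtw_or_wbtw with h | h | h
  · have hop := mem_open_of_mem_seg h.mem_segment hxy.symm hyz
    exact hxy (extreme_pt hP hy ⟨x, hx, hxy⟩ hhx hhz hop).1
  · have hop := mem_open_of_mem_seg h.mem_segment hyz.symm hxz.symm
    exact hyz (extreme_pt hP hz ⟨x, hx, hxz⟩ hhy hhx hop).1
  · have hop := mem_open_of_mem_seg h.mem_segment hxz hxy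
    exact hxz (extreme_pt hP hx ⟨y, hy, hxy.symm⟩ hhz hhy hop).1.symm

lemma mem_seg_line {P : Set Pt} (hP : ∀ y ∈ P, y ∉ convexHull ℝ (P \ {y}))
    {a b x : Pt} (ha : a ∈ P) (hb : b ∈ P) (hab : a ≠ b)
    (hx : x ∈ convexHull ℝ P) (hcol : Collinear ℝ ({a, b, x} : Set Pt)) :
    x ∈ segment ℝ a b := by
  have hha := subset_convexHull ℝ P ha
  have hhb := subset_convexHull ℝ P hb
  rcases hcol.wbtw_or_wbtw_or_wbtw with h | h | h
  · rcases eq_or_ne x b with hxb | hxb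
    · rw [hxb]; exact right_mem_segment ℝ a b
    · have hop := mem_open_of_mem_seg h.mem_segment hab.symm hxb.symm
      exact absurd (extreme_pt hP hb ⟨a, ha, hab⟩ hha hx hop).1 hab
  · rw [segment_symm]
    exact h.mem_segment
  · rcases eq_or_ne x a with hxa | hxa
    · rw [hxa]; exact left_mem_segment ℝ a b
    · have hop := mem_open_of_mem_seg h.mem_segment hxa.symm hab
      exact absurd (extreme_pt hP ha ⟨b, hb, hab.symm⟩ hx hhb hop).1 hxa

lemma gfun_ne_zero {P : Set Pt} (hP : ∀ y ∈ P, y ∉ convexHull ℝ (P \ {y}))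
    {a b k : Pt} (ha : a ∈ P) (hb : b ∈ P) (hk : k ∈ P)
    (hab : a ≠ b) (hak : a ≠ k) (hbk : b ≠ k) : gfun a b k ≠ 0 :=
  fun h => not_collinear_P hP ha hb hk hab hak hbk (collinear_of_gfun hab h)

lemma same_side_step {P : Set Pt} (hP : ∀ y ∈ P, y ∉ convexHull ℝ (P \ {y}))
    (hfin : P.Finite) {a b k k' : Pt}
    (ha : a ∈ P) (hb : b ∈ P) (hk : k ∈ P) (hk' : k' ∈ P)
    (hab : a ≠ b) (hkk' : k ≠ k') (hka : k ≠ a) (hkb : k ≠ b)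
    (hk'a : k' ≠ a) (hk'b : k' ≠ b)
    (hedge : segment ℝ k k' ⊆ frontier (convexHull ℝ P)) :
    0 < gfun a b k * gfun a b k' := by
  have hGk : gfun a b k ≠ 0 := gfun_ne_zero hP ha hb hk hab hka.symm hkb.symm
  have hGk' : gfun a b k' ≠ 0 := gfun_ne_zero hP ha hb hk' hab hk'a.symm hk'b.symm
  rcases lt_trichotomy (gfun a b k * gfun a b k') 0 with hneg | h0 | hpos
  · exfalso
    set Gk := gfun a b k with hGkd
    set Gk' := gfun a b k' with hGk'd
    have hd : Gk - Gk' ≠ 0 := by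
      intro h
      rw [show Gk' = Gk by linarith] at hneg
      nlinarith
    obtain ⟨t, htd⟩ : ∃ t : ℝ, t = Gk / (Gk - Gk') := ⟨_, rfl⟩
    have hsign : (0 < Gk ∧ Gk' < 0) ∨ (Gk < 0 ∧ 0 < Gk') := by
      rcases lt_trichotomy Gk 0 with h | h | h
      · right; exact ⟨h, by nlinarith⟩
      · exact absurd h hGk
      · left; exact ⟨h, by nlinarith⟩
    have ht0 : 0 < t := by
      rw [htd, div_pos_iff]
      rcases hsign with ⟨h1, h2⟩ | ⟨h1, h2⟩
      · left; constructor <;> linarith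
      · right; constructor <;> linarith
    have ht1 : 0 < 1 - t := by
      have : 1 - t = -Gk' / (Gk - Gk') := by rw [htd]; field_simp; ring
      rw [this, div_pos_iff]
      rcases hsign with ⟨h1, h2⟩ | ⟨h1, h2⟩
      · left; constructor <;> linarith
      · right; constructor <;> linarith
    obtain ⟨x, hxd⟩ : ∃ x : Pt, x = (1 - t) • k + t • k' := ⟨_, rfl⟩
    have gzero : gfun a b x = 0 := by
      rw [hxd, gfun_combo a b k k' (1 - t) t (by ring), ← hGkd, ← hGk'd, htd]
      field_simp
      ring
    have hxseg : x ∈ segment ℝ k k' :=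
      ⟨1 - t, t, by linarith, by linarith, by ring, hxd.symm⟩
    have hxopen : x ∈ openSegment ℝ k k' := ⟨1 - t, t, ht1, ht0, by ring, hxd.symm⟩
    have hxK : x ∈ convexHull ℝ P :=
      (convex_convexHull ℝ P).segment_subset (subset_convexHull ℝ P hk)
        (subset_convexHull ℝ P hk') hxseg
    have hxsegab : x ∈ segment ℝ a b :=
      mem_seg_line hP ha hb hab hxK (collinear_of_gfun hab gzero)
    have hxa : x ≠ a := by
      intro h
      rw [h] at hxopen
      exact hka (extreme_pt hP ha ⟨b, hb, hab.symm⟩ (subset_convexHull ℝ P hk)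
        (subset_convexHull ℝ P hk') hxopen).1
    have hxb : x ≠ b := by
      intro h
      rw [h] at hxopen
      exact hkb (extreme_pt hP hb ⟨a, ha, hab⟩ (subset_convexHull ℝ P hk)
        (subset_convexHull ℝ P hk') hxopen).1
    have hxopenab := mem_open_of_mem_seg hxsegab hxa hxb
    have hfront : x ∈ frontier (convexHull ℝ P) := hedge hxseg
    have hspan : affineSpan ℝ P = ⊤ :=
      span_top ha hb hk (not_collinear_P hP ha hb hk hab hka.symm hkb.symm)
    obtain ⟨f, hfle, w, hwK, hwlt⟩ := exists_support hfin hspan hfront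
    have hfa : f a ≤ f x := hfle a (subset_convexHull ℝ P ha)
    have hfb : f b ≤ f x := hfle b (subset_convexHull ℝ P hb)
    have hfk : f k ≤ f x := hfle k (subset_convexHull ℝ P hk)
    have hfk' : f k' ≤ f x := hfle k' (subset_convexHull ℝ P hk')
    obtain ⟨u1, u2, hu1, hu2, hu, hxe⟩ := hxopenab
    have hfeq : u1 * f a + u2 * f b = f x := by
      rw [← hxe] at hfa hfb hfk hfk' ⊢
      rw [map_add, map_smul, map_smul]; simp [smul_eq_mul]
    have hfax : f a = f x := by
      by_contra hne
      have hlt : f a < f x := lt_of_le_of_ne hfa hne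
      have h1 : u1 * f a < u1 * f x := mul_lt_mul_of_pos_left hlt hu1
      have h2 : u2 * f b ≤ u2 * f x := mul_le_mul_of_nonneg_left hfb (le_of_lt hu2)
      have h3 : u1 * f x + u2 * f x = f x := by rw [← add_mul, hu, one_mul]
      linarith
    have hfbx : f b = f x := by
      by_contra hne
      have hlt : f b < f x := lt_of_le_of_ne hfb hne
      have h1 : u2 * f b < u2 * f x := mul_lt_mul_of_pos_left hlt hu2
      have h2 : u1 * f a ≤ u1 * f x := mul_le_mul_of_nonneg_left hfa (le_of_lt hu1)
      have h3 : u1 * f x + u2 * f x = f x := by rw [← add_mul, hu, one_mul]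
      linarith
    have hfeq2 : (1 - t) * f k + t * f k' = f x := by
      conv_rhs => rw [hxd]
      rw [map_add, map_smul, map_smul]; simp [smul_eq_mul]
    have hfkx : f k = f x := by
      by_contra hne
      have hlt : f k < f x := lt_of_le_of_ne hfk hne
      have h1 : (1 - t) * f k < (1 - t) * f x := mul_lt_mul_of_pos_left hlt ht1
      have h2 : t * f k' ≤ t * f x := mul_le_mul_of_nonneg_left hfk' (le_of_lt ht0)
      have h3 : (1 - t) * f x + t * f x = f x := by ring
      linarith
    have hdet := det_zero_of_ker f (b - a) (k - a)
      (by rw [map_sub]; linarith) (by rw [map_sub]; linarith)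
      ⟨x - w, by rw [map_sub]; intro h; exact (ne_of_gt hwlt) (by linarith)⟩
    apply hGk
    rw [hGkd]
    unfold gfun
    have e0 : (b - a) 0 = b 0 - a 0 := rfl
    have e1 : (b - a) 1 = b 1 - a 1 := rfl
    have e2 : (k - a) 0 = k 0 - a 0 := rfl
    have e3 : (k - a) 1 = k 1 - a 1 := rfl
    rw [e0, e1, e2, e3] at hdet
    linarith
  · exact absurd h0 (mul_ne_zero hGk hGk')
  · exact hpos

lemma no_cross_of_gfun {a b c d : Pt} (h : 0 < gfun a b c * gfun a b d) :
    ¬ (openSegment ℝ a b ∩ openSegment ℝ c d).Nonempty := by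
  rintro ⟨x, hx1, hx2⟩
  obtain ⟨s1, s2, hs1, hs2, hs, he1⟩ := hx1
  obtain ⟨t1, t2, ht1, ht2, ht, he2⟩ := hx2
  have g1 : gfun a b x = 0 := by
    rw [← he1, gfun_combo a b a b s1 s2 hs, gfun_left, gfun_right]; ring
  have g2 : gfun a b x = t1 * gfun a b c + t2 * gfun a b d := by
    rw [← he2, gfun_combo a b c d t1 t2 ht]
  rw [g1] at g2
  have key : t1 * (gfun a b c * gfun a b d) + t2 * (gfun a b d * gfun a b d)
      = (t1 * gfun a b c + t2 * gfun a b d) * gfun a b d := by ring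
  rw [← g2, zero_mul] at key
  have h1 : 0 < t1 * (gfun a b c * gfun a b d) := mul_pos ht1 h
  have h2 : 0 ≤ t2 * (gfun a b d * gfun a b d) :=
    mul_nonneg (le_of_lt ht2) (mul_self_nonneg _)
  linarith

lemma openSegment_eq_of_sym2 {a b a' b' : Pt} (h : s(a, b) = s(a', b')) :
    openSegment ℝ a b = openSegment ℝ a' b' := by
  rw [Sym2.eq_iff] at h
  rcases h with ⟨rfl, rfl⟩ | ⟨rfl, rfl⟩
  · rfl
  · exact openSegment_symm ℝ a b

end AuxLemmas

/-- Let `p 0, …, p (n-1)` be `n` points in convex position listed in cyclic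
order (encoded by: consecutive points form hull edges), `n` even, indices taken mod `n`
(`p` is extended `n`-periodically). For `0 ≤ i < n/2` let
`M i = { p ((i+j) % n) p ((n+i-j-1) % n) : 0 ≤ j < n/2 }`
(this is `{ p_{i+j-1} p_{n+i-j} : j = 1, …, n/2 }` reindexed). Then each `M i` is a plane
perfect matching of `P = p '' [0,n)` and the `M i` are pairwise edge-disjoint; hence `n/2`
plane perfect matchings can be packed into the complete geometric graph on `P`. -/
theorem convex_packing_construction (n : ℕ) (hn : Even n) (h4 : 4 ≤ n)
    (p : ℕ → Pt)
    (hper : ∀ k, p (k + n) = p k)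
    (hinj : ∀ i j, i < n → j < n → p i = p j → i = j)
    (hconv : ConvexPosition (p '' Set.Iio n))
    (hord : ∀ i, IsHullEdge (p '' Set.Iio n) s(p i, p (i + 1))) :
    (∀ i < n / 2,
      IsPlaneMatch (p '' Set.Iio n)
        ((fun j => s(p ((i + j) % n), p ((n + i - j - 1) % n))) '' Set.Iio (n / 2))) ∧
    (∀ i₁ i₂, i₁ < n / 2 → i₂ < n / 2 → i₁ ≠ i₂ →
      Disjoint
        ((fun j => s(p ((i₁ + j) % n), p ((n + i₁ - j - 1) % n))) '' Set.Iio (n / 2))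
        ((fun j => s(p ((i₂ + j) % n), p ((n + i₂ - j - 1) % n))) '' Set.Iio (n / 2))) := by
  have hn0 : 0 < n := by omega
  obtain ⟨half, hhalf⟩ := hn
  have hmn : n / 2 * 2 = n := by omega
  set m := n / 2 with hmdef
  have hnm : n = 2 * m := by omega
  have hm2 : 2 ≤ m := by omega
  set P := p '' Set.Iio n with hPdef
  have pmod : ∀ k, p k = p (k % n) := by
    intro k
    induction k using Nat.strong_induction_on with
    | _ k ih =>
      rcases lt_or_ge k n with h | h
      · rw [Nat.mod_eq_of_lt h]
      · have hk : k - n + n = k := by omega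
        calc p k = p (k - n + n) := by rw [hk]
          _ = p (k - n) := hper _
          _ = p ((k - n) % n) := ih _ (by omega)
          _ = p (k % n) := by rw [← Nat.mod_eq_sub_mod h]
  have hmemP : ∀ k : ℕ, p k ∈ P := by
    intro k
    exact ⟨k % n, by simp [Set.mem_Iio]; exact Nat.mod_lt _ hn0, (pmod k).symm⟩
  have hfin : P.Finite := (Set.finite_Iio n).image p
  have hP : ∀ y ∈ P, y ∉ convexHull ℝ (P \ {y}) := hconv
  have hnei : ∀ (i s s' : ℕ), s < n → s' < n → s ≠ s' → p (i + s) ≠ p (i + s') := by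
    intro i s s' hs hs' hss heq
    apply hss
    rw [pmod (i + s), pmod (i + s')] at heq
    have h1 : (i + s) % n = (i + s') % n :=
      hinj _ _ (Nat.mod_lt _ hn0) (Nat.mod_lt _ hn0) heq
    have h2 : s ≡ s' [MOD n] := Nat.ModEq.add_left_cancel' i h1
    rw [Nat.ModEq, Nat.mod_eq_of_lt hs, Nat.mod_eq_of_lt hs'] at h2
    exact h2
  have hedge : ∀ i : ℕ, segment ℝ (p i) (p (i + 1)) ⊆ frontier (convexHull ℝ P) := by
    intro i
    obtain ⟨a, b, hab, _, _, _, hseg⟩ := hord i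
    rw [Sym2.eq_iff] at hab
    rcases hab with ⟨h1, h2⟩ | ⟨h1, h2⟩
    · rw [h1, h2]; exact hseg
    · rw [h1, h2, segment_symm]; exact hseg
  -- the arc-walking lemma
  have walk : ∀ i j : ℕ, j + 1 < n - j - 1 → ∀ t, j < t → t < n - j - 1 →
      0 < gfun (p (i + j)) (p (i + (n - j - 1))) (p (i + t)) *
          gfun (p (i + j)) (p (i + (n - j - 1))) (p (i + (j + 1))) := by
    intro i j hjn
    have hab : p (i + j) ≠ p (i + (n - j - 1)) :=
      hnei i j (n - j - 1) (by omega) (by omega) (by omega)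
    intro t
    induction t with
    | zero => omega
    | succ t ih =>
      intro ht1 ht2
      have hGne : ∀ s, j < s → s < n - j - 1 →
          gfun (p (i + j)) (p (i + (n - j - 1))) (p (i + s)) ≠ 0 := by
        intro s h1 h2
        exact gfun_ne_zero hP (hmemP _) (hmemP _) (hmemP _) hab
          (hnei i j s (by omega) (by omega) (by omega))
          (hnei i (n - j - 1) s (by omega) (by omega) (by omega))
      rcases Nat.eq_or_lt_of_le (Nat.succ_le_of_lt ht1) with heq | hlt
      · -- t + 1 = j + 1
        rw [show t + 1 = j + 1 by omega]
        have := hGne (j + 1) (by omega) (by omega)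
        rcases this.lt_or_gt with h | h
        · nlinarith
        · nlinarith
      · -- j < t, use ih and step
        have hih := ih (by omega) (by omega)
        have hstep : 0 < gfun (p (i + j)) (p (i + (n - j - 1))) (p (i + t)) *
            gfun (p (i + j)) (p (i + (n - j - 1))) (p (i + (t + 1))) := by
          have hseg : segment ℝ (p (i + t)) (p (i + (t + 1))) ⊆
              frontier (convexHull ℝ P) := by
            have := hedge (i + t)
            rwa [show i + t + 1 = i + (t + 1) by omega] at this
          exact same_side_step hP hfin (hmemP (i + j)) (hmemP (i + (n - j - 1)))
            (hmemP (i + t)) (hmemP (i + (t + 1))) hab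
            (hnei i t (t + 1) (by omega) (by omega) (by omega))
            (hnei i t j (by omega) (by omega) (by omega))
            (hnei i t (n - j - 1) (by omega) (by omega) (by omega))
            (hnei i (t + 1) j (by omega) (by omega) (by omega))
            (hnei i (t + 1) (n - j - 1) (by omega) (by omega) (by omega))
            hseg
        have hxne : gfun (p (i + j)) (p (i + (n - j - 1))) (p (i + t)) ≠ 0 :=
          hGne t (by omega) (by omega)
        have hxx := mul_self_pos.mpr hxne
        nlinarith [mul_pos hih hstep]
  -- rewriting the edges into unreduced-index form
  have hrw : ∀ i j : ℕ, j < m →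
      s(p ((i + j) % n), p ((n + i - j - 1) % n)) =
        s(p (i + j), p (i + (n - j - 1))) := by
    intro i j hj
    rw [← pmod (i + j), show (n + i - j - 1) = i + (n - j - 1) by omega,
      ← pmod (i + (n - j - 1))]
  -- non-crossing for j < j'
  have key : ∀ i j j' : ℕ, j < j' → j' < m →
      ¬ EdgesCross s(p ((i + j) % n), p ((n + i - j - 1) % n))
          s(p ((i + j') % n), p ((n + i - j' - 1) % n)) := by
    intro i j j' hjj hj'm hEC
    rw [hrw i j (by omega), hrw i j' hj'm] at hEC
    obtain ⟨a', b', c', d', he, hf, hx⟩ := hEC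
    rw [SegCross, ← openSegment_eq_of_sym2 he, ← openSegment_eq_of_sym2 hf] at hx
    have e1 := walk i j (by omega) j' (by omega) (by omega)
    have e2 := walk i j (by omega) (n - j' - 1) (by omega) (by omega)
    have hfirstne : gfun (p (i + j)) (p (i + (n - j - 1))) (p (i + (j + 1))) ≠ 0 := by
      intro h
      rw [h] at e1
      simp at e1
    have hff := mul_self_pos.mpr hfirstne
    have hprod : 0 < gfun (p (i + j)) (p (i + (n - j - 1))) (p (i + j')) *
        gfun (p (i + j)) (p (i + (n - j - 1))) (p (i + (n - j' - 1))) := by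
      nlinarith [mul_pos e1 e2]
    exact no_cross_of_gfun hprod hx
  have keysymm : ∀ (e f : Sym2 Pt), EdgesCross e f → EdgesCross f e := by
    rintro e f ⟨a, b, c, d, he, hf, x, hx1, hx2⟩
    exact ⟨c, d, a, b, hf, he, x, hx2, hx1⟩
  constructor
  · intro i hi
    constructor
    · constructor
      · rintro e ⟨j, hj, rfl⟩
        simp only [Set.mem_Iio] at hj
        dsimp only
        constructor
        · rw [hrw i j hj, Sym2.mk_isDiag_iff]
          exact hnei i j (n - j - 1) (by omega) (by omega) (by omega)
        · intro x hx
          rw [Sym2.mem_iff] at hx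
          rcases hx with rfl | rfl <;> exact hmemP _
      · rintro x ⟨k, hk, rfl⟩
        simp only [Set.mem_Iio] at hk
        obtain ⟨t, htd⟩ : ∃ t : ℕ, t = (n + k - i) % n := ⟨_, rfl⟩
        have htn : t < n := htd ▸ Nat.mod_lt _ hn0
        have hit : (i + t) % n = k := by
          have h1 : i + t ≡ i + (n + k - i) [MOD n] :=
            Nat.ModEq.add_left i (htd ▸ (Nat.mod_modEq (n + k - i) n))
          have h2 : (i + t) % n = (n + k) % n := by
            rw [show i + (n + k - i) = n + k by omega] at h1
            exact h1
          rw [h2, Nat.add_mod_left, Nat.mod_eq_of_lt hk]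
        have junique : ∀ j' : ℕ, j' < m →
            (p k = p ((i + j') % n) → t = j') ∧
            (p k = p ((n + i - j' - 1) % n) → t = n - j' - 1) := by
          intro j' hj'
          constructor
          · intro h
            have hk1 : k = (i + j') % n :=
              hinj _ _ hk (Nat.mod_lt _ hn0) h
            have hmeq : t ≡ j' [MOD n] := by
              apply Nat.ModEq.add_left_cancel' i
              show (i + t) % n = (i + j') % n
              rw [hit, hk1]
            rw [Nat.ModEq, Nat.mod_eq_of_lt htn, Nat.mod_eq_of_lt (by omega)] at hmeq
            exact hmeq
          · intro h
            have hk1 : k = (n + i - j' - 1) % n :=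
              hinj _ _ hk (Nat.mod_lt _ hn0) h
            have hmeq : t ≡ n - j' - 1 [MOD n] := by
              apply Nat.ModEq.add_left_cancel' i
              show (i + t) % n = (i + (n - j' - 1)) % n
              rw [hit, hk1, show n + i - j' - 1 = i + (n - j' - 1) by omega]
            rw [Nat.ModEq, Nat.mod_eq_of_lt htn, Nat.mod_eq_of_lt (by omega)] at hmeq
            exact hmeq
        rcases lt_or_ge t m with htm | htm
        · refine ⟨s(p ((i + t) % n), p ((n + i - t - 1) % n)),
            ⟨⟨t, by simp [Set.mem_Iio, htm], rfl⟩, ?_⟩, ?_⟩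
          · rw [Sym2.mem_iff]
            left
            rw [hit]
          · rintro e' ⟨⟨j', hj', rfl⟩, hxm⟩
            simp only [Set.mem_Iio] at hj'
            dsimp only at hxm ⊢
            rw [Sym2.mem_iff] at hxm
            rcases hxm with h | h
            · rw [(junique j' hj').1 h]
            · have := (junique j' hj').2 h
              omega
        · refine ⟨s(p ((i + (n - 1 - t)) % n), p ((n + i - (n - 1 - t) - 1) % n)),
            ⟨⟨n - 1 - t, by simp [Set.mem_Iio]; omega, rfl⟩, ?_⟩, ?_⟩
          · rw [Sym2.mem_iff]
            right
            rw [show n + i - (n - 1 - t) - 1 = i + t by omega, hit]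
          · rintro e' ⟨⟨j', hj', rfl⟩, hxm⟩
            simp only [Set.mem_Iio] at hj'
            dsimp only at hxm ⊢
            rw [Sym2.mem_iff] at hxm
            rcases hxm with h | h
            · have := (junique j' hj').1 h
              omega
            · have := (junique j' hj').2 h
              rw [show j' = n - 1 - t by omega]
    · rintro e ⟨j, hj, rfl⟩ f ⟨j', hj', rfl⟩ hne_ef hcross
      simp only [Set.mem_Iio] at hj hj'
      rcases lt_trichotomy j j' with h | h | h
      · exact key i j j' h hj' hcross
      · exact hne_ef (by rw [h])
      · exact key i j' j h hj (keysymm _ _ hcross)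
  · intro i1 i2 h1 h2 hne12
    rw [Set.disjoint_left]
    rintro e ⟨j1, hj1, rfl⟩ ⟨j2, hj2, he⟩
    simp only [Set.mem_Iio] at hj1 hj2
    dsimp only at he
    rw [Sym2.eq_iff] at he
    have hsum : (i2 + j2) + (n + i2 - j2 - 1) ≡ (i1 + j1) + (n + i1 - j1 - 1) [MOD n] := by
      rcases he with ⟨h1e, h2e⟩ | ⟨h1e, h2e⟩
      · have c1 : (i2 + j2) % n = (i1 + j1) % n :=
          hinj _ _ (Nat.mod_lt _ hn0) (Nat.mod_lt _ hn0) h1e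
        have c2 : (n + i2 - j2 - 1) % n = (n + i1 - j1 - 1) % n :=
          hinj _ _ (Nat.mod_lt _ hn0) (Nat.mod_lt _ hn0) h2e
        exact Nat.ModEq.add c1 c2
      · have c1 : (i2 + j2) % n = (n + i1 - j1 - 1) % n :=
          hinj _ _ (Nat.mod_lt _ hn0) (Nat.mod_lt _ hn0) h1e
        have c2 : (n + i2 - j2 - 1) % n = (i1 + j1) % n :=
          hinj _ _ (Nat.mod_lt _ hn0) (Nat.mod_lt _ hn0) h2e
        have := Nat.ModEq.add c1 c2
        calc (i2 + j2) + (n + i2 - j2 - 1)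
            ≡ (n + i1 - j1 - 1) + (i1 + j1) [MOD n] := this
          _ = (i1 + j1) + (n + i1 - j1 - 1) := by omega
    have hs2 : 2 * i2 + (n - 1) ≡ 2 * i1 + (n - 1) [MOD n] := by
      rw [show 2 * i2 + (n - 1) = (i2 + j2) + (n + i2 - j2 - 1) by omega,
        show 2 * i1 + (n - 1) = (i1 + j1) + (n + i1 - j1 - 1) by omega]
      exact hsum
    have hcan : 2 * i2 ≡ 2 * i1 [MOD n] := Nat.ModEq.add_right_cancel' (n - 1) hs2
    rw [Nat.ModEq, Nat.mod_eq_of_lt (by omega), Nat.mod_eq_of_lt (by omega)] at hcan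
    omega
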